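/- Closed form of the forward diffusion process (one-dimensional): Fix T ∈ ℕ and noise variances β_1, …, β_T ∈ (0, 1); set α_t = 1 − β_t and ᾱ_t = ∏_{s=1}^{t} α_s. Let ε_1, …, ε_T be independent standard Gaussian random variables, fix e_0 ∈ ℝ, and define the process e_t = √α_t · e_{t−1} + √β_t · ε_t for t = 1, …, T. Then for every t ∈ {1, …, T}, the law of e_t is the Gaussian measure on ℝ with mean √ᾱ_t · e_0 and variance 1 − ᾱ_t; equivalently, e_t has the same law as √ᾱ_t · e_0 + √(1 − ᾱ_t) · ε for ε a standard Gaussian. -/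

import Mathlib

open MeasureTheory ProbabilityTheory
open Real
open scoped NNReal ENNReal

lemma gaussianPDFReal_mul_eq (m1 m2 : ℝ) (v1 v2 : ℝ≥0) (h1 : v1 ≠ 0) (h2 : v2 ≠ 0) (z x : ℝ) :
    gaussianPDFReal m1 v1 x * gaussianPDFReal m2 v2 (z - x)
      = gaussianPDFReal (m1 + m2) (v1 + v2) z *
        gaussianPDFReal ((v2 * m1 + v1 * (z - m2)) / (v1 + v2)) (v1 * v2 / (v1 + v2)) x := by
  have ha : (0:ℝ) < v1 := lt_of_le_of_ne v1.2 (by exact_mod_cast (Ne.symm h1))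
  have hb : (0:ℝ) < v2 := lt_of_le_of_ne v2.2 (by exact_mod_cast (Ne.symm h2))
  have hab : (0:ℝ) < (v1:ℝ) + v2 := by linarith
  have hw : ((v1 * v2 / (v1 + v2) : ℝ≥0) : ℝ) = (v1:ℝ) * v2 / ((v1:ℝ) + v2) := by push_cast; ring
  simp only [gaussianPDFReal, NNReal.coe_add, hw]
  rw [mul_mul_mul_comm, mul_mul_mul_comm ((√(2 * π * ((v1:ℝ) + v2)))⁻¹), ← Real.exp_add, ← Real.exp_add]
  congr 1
  · rw [← mul_inv, ← mul_inv, ← Real.sqrt_mul (by positivity), ← Real.sqrt_mul (by positivity)]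
    congr 2
    field_simp
  · congr 1
    field_simp
    ring

lemma lintegral_gaussianPDF_conv (m1 m2 : ℝ) (v1 v2 : ℝ≥0) (h1 : v1 ≠ 0) (h2 : v2 ≠ 0) (z : ℝ) :
    ∫⁻ x, gaussianPDF m1 v1 x * gaussianPDF m2 v2 (z - x)
      = gaussianPDF (m1 + m2) (v1 + v2) z := by
  have hw : v1 * v2 / (v1 + v2) ≠ 0 := by
    positivity
  calc ∫⁻ x, gaussianPDF m1 v1 x * gaussianPDF m2 v2 (z - x)
      = ∫⁻ x, gaussianPDF (m1 + m2) (v1 + v2) z *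
          gaussianPDF ((v2 * m1 + v1 * (z - m2)) / (v1 + v2)) (v1 * v2 / (v1 + v2)) x := by
        congr 1
        ext x
        rw [gaussianPDF, gaussianPDF, ← ENNReal.ofReal_mul (gaussianPDFReal_nonneg _ _ _),
          gaussianPDFReal_mul_eq m1 m2 v1 v2 h1 h2 z x,
          ENNReal.ofReal_mul (gaussianPDFReal_nonneg _ _ _)]
        rfl
    _ = gaussianPDF (m1 + m2) (v1 + v2) z := by
        rw [lintegral_const_mul _ (measurable_gaussianPDF _ _),
          lintegral_gaussianPDF_eq_one _ hw, mul_one]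

lemma gaussianReal_conv (m1 m2 : ℝ) (v1 v2 : ℝ≥0) :
    Measure.conv (gaussianReal m1 v1) (gaussianReal m2 v2) = gaussianReal (m1 + m2) (v1 + v2) := by
  by_cases h1 : v1 = 0
  · subst h1
    rw [gaussianReal_zero_var, Measure.conv, Measure.dirac_prod,
      Measure.map_map measurable_add measurable_prodMk_left]
    have h : ((fun p : ℝ × ℝ => p.1 + p.2) ∘ Prod.mk m1) = (m1 + ·) := rfl
    rw [h, gaussianReal_map_const_add, add_comm m2 m1, zero_add]
  by_cases h2 : v2 = 0
  · subst h2
    rw [gaussianReal_zero_var, Measure.conv, Measure.prod_dirac,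
      Measure.map_map measurable_add measurable_prodMk_right]
    have h : ((fun p : ℝ × ℝ => p.1 + p.2) ∘ (fun x => (x, m2))) = (· + m2) := rfl
    rw [h, gaussianReal_map_add_const, add_zero]
  have h12 : v1 + v2 ≠ 0 := by positivity
  set f := gaussianPDF m1 v1 with hf
  set g := gaussianPDF m2 v2 with hg
  rw [gaussianReal_of_var_ne_zero _ h1, gaussianReal_of_var_ne_zero _ h2,
    gaussianReal_of_var_ne_zero _ h12]
  ext s hs
  have hpre : MeasurableSet ((fun p : ℝ × ℝ => p.1 + p.2) ⁻¹' s) := hs.preimage measurable_add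
  rw [Measure.conv, Measure.map_apply measurable_add hs, Measure.prod_apply hpre,
    withDensity_apply _ hs,
    lintegral_withDensity_eq_lintegral_mul _ (measurable_gaussianPDF _ _)
      (measurable_measure_prodMk_left hpre)]
  have key : ∀ x : ℝ, (volume.withDensity g)
      (Prod.mk x ⁻¹' ((fun p : ℝ × ℝ => p.1 + p.2) ⁻¹' s))
      = ∫⁻ z, g (z - x) * s.indicator 1 z := by
    intro x
    have hpre2 : (Prod.mk x ⁻¹' ((fun p : ℝ × ℝ => p.1 + p.2) ⁻¹' s))
        = (fun y => x + y) ⁻¹' s := rfl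
    have hs2 : MeasurableSet ((fun y => x + y) ⁻¹' s) := hs.preimage (measurable_const_add x)
    rw [hpre2, withDensity_apply _ hs2, ← lintegral_indicator hs2 _]
    have h : ∀ y : ℝ, ((fun y => x + y) ⁻¹' s).indicator g y
        = (fun z => g (z - x) * s.indicator 1 z) (x + y) := by
      intro y
      by_cases hy : x + y ∈ s
      · simp [Set.indicator_of_mem, hy, Set.mem_preimage.mpr hy]
      · simp [Set.indicator_of_notMem, hy, Set.indicator_of_notMem (Set.mem_preimage.not.mpr hy)]
    simp_rw [h]
    simpa using lintegral_add_left_eq_self (fun z => g (z - x) * s.indicator 1 z) x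
  simp_rw [← hf, ← hg, key]
  have hmg : Measurable g := measurable_gaussianPDF _ _
  have hmf : Measurable f := measurable_gaussianPDF _ _
  have hmi : Measurable (s.indicator (1 : ℝ → ℝ≥0∞)) := measurable_one.indicator hs
  have hm1 : ∀ x : ℝ, Measurable fun z => g (z - x) * s.indicator 1 z :=
    fun x => ((hmg.comp (measurable_id.sub_const x)).mul hmi)
  have hm2 : ∀ z : ℝ, Measurable fun x => f x * g (z - x) :=
    fun z => hmf.mul (hmg.comp (measurable_const.sub measurable_id))
  calc ∫⁻ x, f x * ∫⁻ z, g (z - x) * s.indicator 1 z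
      = ∫⁻ x, ∫⁻ z, f x * (g (z - x) * s.indicator 1 z) := by
        congr 1; ext x
        rw [lintegral_const_mul (f x) (hm1 x)]
    _ = ∫⁻ z, ∫⁻ x, f x * (g (z - x) * s.indicator 1 z) := by
        refine lintegral_lintegral_swap ?_
        apply Measurable.aemeasurable
        apply (hmf.comp measurable_fst).mul
        exact ((hmg.comp (measurable_snd.sub measurable_fst)).mul (hmi.comp measurable_snd))
    _ = ∫⁻ z, (∫⁻ x, f x * g (z - x)) * s.indicator 1 z := by
        congr 1; ext z
        simp_rw [← mul_assoc]
        rw [lintegral_mul_const _ (hm2 z)]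
    _ = ∫⁻ z, gaussianPDF (m1 + m2) (v1 + v2) z * s.indicator 1 z := by
        congr 1; ext z
        rw [lintegral_gaussianPDF_conv m1 m2 v1 v2 h1 h2 z]
    _ = ∫⁻ z in s, gaussianPDF (m1 + m2) (v1 + v2) z := by
        rw [← lintegral_indicator hs _]
        congr 1; ext z
        by_cases hz : z ∈ s
        · simp [Set.indicator_of_mem, hz]
        · simp [Set.indicator_of_notMem, hz]


/-- **Closed form of the forward diffusion process (one-dimensional).** Let
`β 1, …, β T ∈ (0,1)`, set `α t = 1 - β t` and `ᾱ t = ∏_{s=1}^t α s`. Let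
`ε 0, …, ε (T-1)` be independent standard Gaussians (where `ε i` is the noise added at
step `t = i + 1`), let `e 0 = e₀`, and let `e t = √(α t) * e (t-1) + √(β t) * ε_t`.
Then for every `t ∈ {1, …, T}`, the law of `e t` is Gaussian with mean `√(ᾱ t) * e₀`
and variance `1 - ᾱ t`. -/
theorem forward_diffusion_closed_form
    {Ω : Type*} [MeasurableSpace Ω] (μ : Measure Ω) [IsProbabilityMeasure μ]
    (T : ℕ) (β : ℕ → ℝ) (hβ : ∀ t ∈ Finset.Icc 1 T, β t ∈ Set.Ioo (0 : ℝ) 1)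
    (ε : Fin T → Ω → ℝ) (hεm : ∀ i, Measurable (ε i))
    (hindep : iIndepFun ε μ)
    (hε : ∀ i, Measure.map (ε i) μ = gaussianReal 0 1)
    (e₀ : ℝ) (e : ℕ → Ω → ℝ)
    (hinit : e 0 = fun _ => e₀)
    (hstep : ∀ i : Fin T, e (i.val + 1) =
      fun ω => Real.sqrt (1 - β (i.val + 1)) * e i.val ω
        + Real.sqrt (β (i.val + 1)) * ε i ω) :
    ∀ t ∈ Finset.Icc 1 T,
      Measure.map (e t) μ =
        gaussianReal (Real.sqrt (∏ s ∈ Finset.Icc 1 t, (1 - β s)) * e₀)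
          (1 - ∏ s ∈ Finset.Icc 1 t, (1 - β s)).toNNReal := by

  -- measurability of e
  have hem : ∀ t, t ≤ T → Measurable (e t) := by
    intro t
    induction t with
    | zero => intro _; rw [hinit]; exact measurable_const
    | succ n ih =>
      intro h
      have hn : n < T := h
      rw [hstep ⟨n, hn⟩]
      exact ((ih hn.le).const_mul _).add ((hεm _).const_mul _)
  -- e t factors through the first t noises
  have hfac : ∀ t, t ≤ T → ∃ g : (Fin T → ℝ) → ℝ, Measurable g ∧
      (e t = fun ω => g (fun i => ε i ω)) ∧
      ∀ x y : Fin T → ℝ, (∀ i : Fin T, (i : ℕ) < t → x i = y i) → g x = g y := by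
    intro t
    induction t with
    | zero =>
      intro _
      exact ⟨fun _ => e₀, measurable_const, by rw [hinit], fun _ _ _ => rfl⟩
    | succ n ih =>
      intro h
      have hn : n < T := h
      obtain ⟨g, hgm, hge, hgi⟩ := ih hn.le
      refine ⟨fun x => Real.sqrt (1 - β (n+1)) * g x + Real.sqrt (β (n+1)) * x ⟨n, hn⟩,
        (hgm.const_mul _).add ((measurable_pi_apply _).const_mul _), ?_, ?_⟩
      · rw [hstep ⟨n, hn⟩, hge]
      · intro x y hxy
        dsimp only
        rw [hgi x y fun i hi => hxy i (Nat.lt_succ_of_lt hi), hxy ⟨n, hn⟩ (Nat.lt_succ_self n)]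
  -- independence of e (j.val) and ε j
  have hInd : ∀ j : Fin T, IndepFun (e j.val) (ε j) μ := by
    intro j
    obtain ⟨g, hgm, hge, hgi⟩ := hfac j.val j.2.le
    set S : Finset (Fin T) := Finset.univ.filter (fun i => (i : ℕ) < j.val) with hS
    have hdisj : Disjoint S {j} := by
      simp only [Finset.disjoint_singleton_right, hS, Finset.mem_filter]
      simp
    have h0 := hindep.indepFun_finset S {j} hdisj hεm
    set G : ((i : S) → ℝ) → ℝ := fun v => g (fun i => if h : i ∈ S then v ⟨i, h⟩ else 0)
      with hG
    have hGm : Measurable G := by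
      apply hgm.comp
      apply measurable_pi_lambda
      intro i
      by_cases h : i ∈ S
      · simpa [h] using measurable_pi_apply (⟨i, h⟩ : {x // x ∈ S})
      · simpa [h] using measurable_const
    have hjmem : j ∈ ({j} : Finset (Fin T)) := Finset.mem_singleton_self j
    have h1 := h0.comp hGm (measurable_pi_apply (⟨j, hjmem⟩ : {x // x ∈ ({j} : Finset (Fin T))}))
    have he : e j.val = (G ∘ fun a (i : S) => ε i a) := by
      rw [hge]; funext a
      refine hgi _ _ fun i hi => ?_
      have hiS : i ∈ S := Finset.mem_filter.mpr ⟨Finset.mem_univ _, hi⟩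
      rw [dif_pos hiS]
    have hee : ε j = ((fun v : (i : ({j} : Finset (Fin T))) → ℝ => v ⟨j, hjmem⟩) ∘
        fun a (i : ({j} : Finset (Fin T))) => ε i a) := rfl
    rw [he, hee]
    exact h1
  -- the cumulative product is in (0, 1]
  have hprod : ∀ t, t ≤ T → (∏ s ∈ Finset.Icc 1 t, (1 - β s)) ∈ Set.Ioc (0:ℝ) 1 := by
    intro t
    induction t with
    | zero => intro _; simp
    | succ n ih =>
      intro h
      have hn : n < T := h
      obtain ⟨hp0, hp1⟩ := ih hn.le
      have hb := hβ (n+1) (Finset.mem_Icc.mpr ⟨Nat.succ_le_succ n.zero_le, h⟩)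
      rw [Finset.prod_Icc_succ_top (Nat.succ_le_succ n.zero_le)]
      constructor
      · have : (0:ℝ) < 1 - β (n+1) := by linarith [hb.2]
        positivity
      · nlinarith [hb.1, hb.2]
  -- main induction
  have main : ∀ t, t ≤ T → Measure.map (e t) μ =
      gaussianReal (Real.sqrt (∏ s ∈ Finset.Icc 1 t, (1 - β s)) * e₀)
        (1 - ∏ s ∈ Finset.Icc 1 t, (1 - β s)).toNNReal := by
    intro t
    induction t with
    | zero =>
      intro _
      rw [hinit]
      simp [Measure.map_const, gaussianReal_zero_var]
    | succ n ih =>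
      intro h
      have hn : n < T := h
      have ihn := ih hn.le
      set A := ∏ s ∈ Finset.Icc 1 n, (1 - β s) with hA
      obtain ⟨hA0, hA1⟩ := hprod n hn.le
      have hb := hβ (n+1) (Finset.mem_Icc.mpr ⟨Nat.succ_le_succ n.zero_le, h⟩)
      have ha0 : (0:ℝ) ≤ 1 - β (n+1) := by linarith [hb.2]
      have hb0 : (0:ℝ) ≤ β (n+1) := hb.1.le
      set j : Fin T := ⟨n, hn⟩ with hj
      set X : Ω → ℝ := fun ω => Real.sqrt (1 - β (n+1)) * e n ω with hX
      set Y : Ω → ℝ := fun ω => Real.sqrt (β (n+1)) * ε j ω with hY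
      have hXm : Measurable X := (hem n hn.le).const_mul _
      have hYm : Measurable Y := (hεm j).const_mul _
      have hIXY : IndepFun X Y μ :=
        (hInd j).comp (measurable_const_mul _) (measurable_const_mul _)
      have hmapX : Measure.map X μ = gaussianReal (Real.sqrt (1 - β (n+1)) * (Real.sqrt A * e₀))
          (NNReal.mk ((Real.sqrt (1 - β (n+1)))^2) (sq_nonneg _) * (1 - A).toNNReal) := by
        have hcomp : X = (fun x => Real.sqrt (1 - β (n+1)) * x) ∘ e n := rfl
        rw [hcomp, ← Measure.map_map (measurable_const_mul _) (hem n hn.le), ihn,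
          gaussianReal_map_const_mul]
      have hmapY : Measure.map Y μ = gaussianReal 0
          (NNReal.mk ((Real.sqrt (β (n+1)))^2) (sq_nonneg _) * 1) := by
        have hcomp : Y = (fun x => Real.sqrt (β (n+1)) * x) ∘ ε j := rfl
        rw [hcomp, ← Measure.map_map (measurable_const_mul _) (hεm j), hε j,
          gaussianReal_map_const_mul, mul_zero]
      have hsum : Measure.map (fun ω => X ω + Y ω) μ =
          Measure.conv (Measure.map X μ) (Measure.map Y μ) := by
        rw [Measure.conv,
          ← (indepFun_iff_map_prod_eq_prod_map_map hXm.aemeasurable hYm.aemeasurable).mp hIXY,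
          Measure.map_map measurable_add (hXm.prodMk hYm)]
        rfl
      have hse : e (n+1) = fun ω => X ω + Y ω := hstep j
      rw [hse, hsum, hmapX, hmapY, gaussianReal_conv,
        Finset.prod_Icc_succ_top (Nat.succ_le_succ n.zero_le), ← hA]
      congr 1
      · rw [add_zero, ← mul_assoc, ← Real.sqrt_mul ha0, mul_comm (1 - β (n+1)) A]
      · apply NNReal.coe_injective
        push_cast
        rw [Real.sq_sqrt ha0, Real.sq_sqrt hb0,
          Real.coe_toNNReal _ (by linarith : (0:ℝ) ≤ 1 - A),
          Real.coe_toNNReal _ (by nlinarith : (0:ℝ) ≤ 1 - A * (1 - β (n+1)))]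
        ring
  intro t ht
  exact main t (Finset.mem_Icc.mp ht).2
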